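/- There exist reals a, b > 0, η > 0, a price cap p̄ with b/(2a) < p̄ and b − (a+η)·p̄ ≥ 0, a starting reference price r1 ∈ [0,p̄], a constant c > 0, and T0 ∈ ℕ such that the following holds for the ARM model with linear demand H(p) = b − a·p and symmetric reference effects η⁺ = η⁻ = η: for every horizon T ≥ T0 and every fixed price p ∈ [0,p̄], the optimal T-round revenue exceeds the T-round revenue of the constant price sequence (p, p, …, p) by at least c·T; that is, V*(r1, 1) − V^{(p,…,p)}(r1, 1) ≥ c·T. (Every fixed-price policy suffers revenue loss growing linearly in the horizon under the averaging reference mechanism.) -/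

import Mathlib

/-- ARM reference price at time `t`, starting from reference price `r` at time `t1`:
`r_t = (t1·r + Σ_{s=t1}^{t−1} p_s)/t`. -/
noncomputable def armRef (t1 : ℕ) (r : ℝ) (p : ℕ → ℝ) (t : ℕ) : ℝ :=
  ((t1 : ℝ) * r + ∑ s ∈ Finset.Ico t1 t, p s) / (t : ℝ)

/-- Single-round expected revenue `Π(x, r)` with base demand `H` and reference effects. -/
noncomputable def armRev (H : ℝ → ℝ) (ηp ηm : ℝ) (x r : ℝ) : ℝ :=
  x * (H x + ηp * max (r - x) 0 - ηm * max (x - r) 0)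

/-- Total ARM revenue `V^p(r, t1)` of price sequence `p` over rounds `t1..T`. -/
noncomputable def armV (H : ℝ → ℝ) (ηp ηm : ℝ) (t1 T : ℕ) (r : ℝ) (p : ℕ → ℝ) : ℝ :=
  ∑ t ∈ Finset.Icc t1 T, armRev H ηp ηm (p t) (armRef t1 r p t)

/-- Optimal ARM revenue `V*(r, 1)` over horizon `T`. -/
noncomputable def armVStar (H : ℝ → ℝ) (ηp ηm : ℝ) (t1 T : ℕ) (pbar r : ℝ) : ℝ :=
  sSup {x : ℝ | ∃ p : ℕ → ℝ,
    (∀ t ∈ Finset.Icc t1 T, p t ∈ Set.Icc 0 pbar) ∧ x = armV H ηp ηm t1 T r p}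

lemma armRev_eq (H : ℝ → ℝ) (η x r : ℝ) :
    armRev H η η x r = x * (H x + η * (r - x)) := by
  unfold armRev
  rcases le_total x r with h | h
  · rw [max_eq_left (by linarith), max_eq_right (by linarith)]; ring
  · rw [max_eq_right (by linarith), max_eq_left (by linarith)]; ring

/-- build-phase value -/
lemma build_val (K t : ℕ) (ht0 : 0 < t) (htK : t ≤ K) :
    armRev (fun x => 2 - 1 * x) (2/3) (2/3) ((fun s => if s ≤ K then (6/5:ℝ) else 1) t)
      (armRef 1 0 (fun s => if s ≤ K then (6/5:ℝ) else 1) t)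
    = 24/25 - (24/25) * (1 / (t:ℝ)) := by
  have htR : (1:ℝ) ≤ (t:ℝ) := by exact_mod_cast ht0
  have htpos : (0:ℝ) < (t:ℝ) := by linarith
  have hqt : (if t ≤ K then (6/5:ℝ) else 1) = 6/5 := if_pos htK
  have hsum : ∑ s ∈ Finset.Ico 1 t, (if s ≤ K then (6/5:ℝ) else 1) = ((t:ℝ) - 1) * (6/5) := by
    have hcongr : ∀ s ∈ Finset.Ico 1 t, (if s ≤ K then (6/5:ℝ) else 1) = (6/5 : ℝ) := by
      intro s hs
      rw [Finset.mem_Ico] at hs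
      exact if_pos (by omega)
    rw [Finset.sum_congr rfl hcongr, Finset.sum_const, Nat.card_Ico, nsmul_eq_mul,
      Nat.cast_sub ht0]
    push_cast; ring
  simp only
  rw [hqt, armRev_eq]
  unfold armRef
  rw [hsum]
  field_simp
  ring

/-- exploit-phase value -/
lemma exp_val (K t : ℕ) (htK : K < t) :
    armRev (fun x => 2 - 1 * x) (2/3) (2/3) ((fun s => if s ≤ K then (6/5:ℝ) else 1) t)
      (armRef 1 0 (fun s => if s ≤ K then (6/5:ℝ) else 1) t)
    = 1 + (2/3) * (((K:ℝ)/5 - 1) / (t:ℝ)) := by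
  have htR : (1:ℝ) ≤ (t:ℝ) := by exact_mod_cast Nat.one_le_iff_ne_zero.mpr (by omega)
  have htpos : (0:ℝ) < (t:ℝ) := by linarith
  have hqt : (if t ≤ K then (6/5:ℝ) else 1) = 1 := if_neg (by omega)
  have hsum : ∑ s ∈ Finset.Ico 1 t, (if s ≤ K then (6/5:ℝ) else 1)
      = (K:ℝ) * (6/5) + ((t:ℝ) - 1 - (K:ℝ)) := by
    rw [← Finset.sum_Ico_consecutive _ (show 1 ≤ K + 1 by omega) (show K + 1 ≤ t by omega)]
    have h1 : ∑ s ∈ Finset.Ico 1 (K+1), (if s ≤ K then (6/5:ℝ) else 1) = (K:ℝ) * (6/5) := by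
      have hcongr : ∀ s ∈ Finset.Ico 1 (K+1), (if s ≤ K then (6/5:ℝ) else 1) = (6/5 : ℝ) := by
        intro s hs
        rw [Finset.mem_Ico] at hs
        exact if_pos (by omega)
      rw [Finset.sum_congr rfl hcongr, Finset.sum_const, Nat.card_Ico, nsmul_eq_mul]
      norm_num
    have h2 : ∑ s ∈ Finset.Ico (K+1) t, (if s ≤ K then (6/5:ℝ) else 1) = (t:ℝ) - 1 - (K:ℝ) := by
      have hcongr : ∀ s ∈ Finset.Ico (K+1) t, (if s ≤ K then (6/5:ℝ) else 1) = (1 : ℝ) := by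
        intro s hs
        rw [Finset.mem_Ico] at hs
        exact if_neg (by omega)
      rw [Finset.sum_congr rfl hcongr, Finset.sum_const, Nat.card_Ico, nsmul_eq_mul,
        mul_one, Nat.cast_sub (by omega : K + 1 ≤ t)]
      push_cast; ring
    rw [h1, h2]
  simp only
  rw [hqt, armRev_eq]
  unfold armRef
  rw [hsum]
  field_simp
  ring

/-- fixed-price revenue is at most T -/
lemma fix_le (T : ℕ) (p : ℝ) (hp0 : 0 ≤ p) :
    armV (fun x => 2 - 1 * x) (2/3) (2/3) 1 T 0 (fun _ => p) ≤ (T:ℝ) := by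
  unfold armV
  have hb : ∀ t ∈ Finset.Icc 1 T,
      armRev (fun x => 2 - 1 * x) (2/3) (2/3) ((fun _ => p) t)
        (armRef 1 0 (fun _ => p) t) ≤ 1 := by
    intro t ht
    rw [Finset.mem_Icc] at ht
    have ht1 : 1 ≤ t := ht.1
    have htR : (1:ℝ) ≤ (t:ℝ) := by exact_mod_cast ht1
    have htpos : (0:ℝ) < (t:ℝ) := by linarith
    have hr : armRef 1 0 (fun _ => p) t = ((t:ℝ) - 1) * p / (t:ℝ) := by
      unfold armRef
      rw [Finset.sum_const, Nat.card_Ico, nsmul_eq_mul, Nat.cast_sub ht1]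
      push_cast
      ring
    rw [armRev_eq, hr]
    have he : ((t:ℝ) - 1) * p / (t:ℝ) - p = -(p / (t:ℝ)) := by
      field_simp
      ring
    rw [he]
    have hpt : 0 ≤ p / (t:ℝ) := div_nonneg hp0 htpos.le
    simp only
    nlinarith [sq_nonneg (p - 1), mul_nonneg hp0 hpt]
  calc ∑ t ∈ Finset.Icc 1 T, armRev (fun x => 2 - 1 * x) (2/3) (2/3) ((fun _ => p) t)
        (armRef 1 0 (fun _ => p) t)
      ≤ (Finset.Icc 1 T).card • (1:ℝ) := Finset.sum_le_card_nsmul _ _ _ hb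
    _ = (T:ℝ) := by
        rw [Nat.card_Icc, nsmul_eq_mul, mul_one]
        norm_num

lemma rev_le_four (x r : ℝ) (hx0 : 0 ≤ x) (hx1 : x ≤ 6/5) (hr0 : 0 ≤ r) (hr1 : r ≤ 6/5) :
    armRev (fun y => 2 - 1 * y) (2/3) (2/3) x r ≤ 4 := by
  rw [armRev_eq]
  have h1 : x * r ≤ x * (6/5) := mul_le_mul_of_nonneg_left hr1 hx0
  nlinarith [sq_nonneg x, mul_nonneg hx0 hr0]

/-- any admissible policy has revenue at most 4T -/
lemma adm_le (T : ℕ) (pp : ℕ → ℝ) (hpp : ∀ t ∈ Finset.Icc 1 T, pp t ∈ Set.Icc (0:ℝ) (6/5)) :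
    armV (fun x => 2 - 1 * x) (2/3) (2/3) 1 T 0 pp ≤ 4 * (T:ℝ) := by
  unfold armV
  have hb : ∀ t ∈ Finset.Icc 1 T,
      armRev (fun x => 2 - 1 * x) (2/3) (2/3) (pp t) (armRef 1 0 pp t) ≤ 4 := by
    intro t ht
    rw [Finset.mem_Icc] at ht
    have ht1 : 1 ≤ t := ht.1
    have htR : (1:ℝ) ≤ (t:ℝ) := by exact_mod_cast ht1
    have htpos : (0:ℝ) < (t:ℝ) := by linarith
    have hx := hpp t (Finset.mem_Icc.mpr ht)
    have hsub : ∀ s ∈ Finset.Ico 1 t, pp s ∈ Set.Icc (0:ℝ) (6/5) := by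
      intro s hs
      rw [Finset.mem_Ico] at hs
      exact hpp s (Finset.mem_Icc.mpr ⟨hs.1, by omega⟩)
    have hsum0 : 0 ≤ ∑ s ∈ Finset.Ico 1 t, pp s :=
      Finset.sum_nonneg fun s hs => (hsub s hs).1
    have hsum1 : ∑ s ∈ Finset.Ico 1 t, pp s ≤ (t:ℝ) * (6/5) := by
      calc ∑ s ∈ Finset.Ico 1 t, pp s ≤ (Finset.Ico 1 t).card • (6/5 : ℝ) :=
            Finset.sum_le_card_nsmul _ _ _ fun s hs => (hsub s hs).2
        _ = ((t - 1 : ℕ) : ℝ) * (6/5) := by rw [Nat.card_Ico, nsmul_eq_mul]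
        _ ≤ (t:ℝ) * (6/5) := by
            have : ((t - 1 : ℕ) : ℝ) ≤ (t : ℝ) := by exact_mod_cast Nat.sub_le t 1
            nlinarith
    have hr0 : 0 ≤ armRef 1 0 pp t := by
      unfold armRef
      apply div_nonneg _ htpos.le
      simpa using hsum0
    have hr1 : armRef 1 0 pp t ≤ 6/5 := by
      unfold armRef
      rw [div_le_iff₀ htpos]
      push_cast
      nlinarith
    exact rev_le_four (pp t) _ hx.1 hx.2 hr0 hr1
  calc ∑ t ∈ Finset.Icc 1 T, armRev (fun x => 2 - 1 * x) (2/3) (2/3) (pp t) (armRef 1 0 pp t)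
      ≤ (Finset.Icc 1 T).card • (4:ℝ) := Finset.sum_le_card_nsmul _ _ _ hb
    _ ≤ 4 * (T:ℝ) := by
        rw [Nat.card_Icc, nsmul_eq_mul]
        norm_num [mul_comm]

/-- lower bound for the two-phase policy -/
lemma qlow (T : ℕ) (hT : 100000 ≤ T) :
    (T:ℝ) + (T:ℝ) / 250 ≤
      armV (fun x => 2 - 1 * x) (2/3) (2/3) 1 T 0
        (fun s => if s ≤ T / 2 then (6/5:ℝ) else 1) := by
  set K : ℕ := T / 2 with hKdef
  have hK100 : 100 ≤ K := by omega
  have hKT : K ≤ T := by omega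
  have hτ : (100000 : ℝ) ≤ (T:ℝ) := by exact_mod_cast hT
  have hτpos : (0:ℝ) < (T:ℝ) := by linarith
  have hk50000 : (50000 : ℝ) ≤ (K:ℝ) := by
    have h : (50000 : ℕ) ≤ K := by omega
    exact_mod_cast h
  have hk2 : 2 * (K:ℝ) ≤ (T:ℝ) := by
    have h : 2 * K ≤ T := by omega
    exact_mod_cast h
  have hk2' : (T:ℝ) ≤ 2 * (K:ℝ) + 1 := by
    have h : T ≤ 2 * K + 1 := by omega
    exact_mod_cast h
  have hk5 : (0:ℝ) ≤ (K:ℝ) / 5 - 1 := by linarith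
  have hVeq : armV (fun x => 2 - 1 * x) (2/3) (2/3) 1 T 0
        (fun s => if s ≤ K then (6/5:ℝ) else 1)
      = ∑ t ∈ Finset.Ioc 0 T, armRev (fun x => 2 - 1 * x) (2/3) (2/3)
          ((fun s => if s ≤ K then (6/5:ℝ) else 1) t)
          (armRef 1 0 (fun s => if s ≤ K then (6/5:ℝ) else 1) t) := by
    unfold armV
    rw [← Finset.Icc_add_one_left_eq_Ioc 0 T, zero_add]
  rw [hVeq]
  rw [← Finset.sum_Ioc_consecutive _ (Nat.zero_le K) hKT,
    ← Finset.sum_Ioc_consecutive _ (Nat.zero_le 100) hK100]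
  have hS1 : (0:ℝ) ≤ ∑ t ∈ Finset.Ioc 0 100, armRev (fun x => 2 - 1 * x) (2/3) (2/3)
      ((fun s => if s ≤ K then (6/5:ℝ) else 1) t)
      (armRef 1 0 (fun s => if s ≤ K then (6/5:ℝ) else 1) t) := by
    apply Finset.sum_nonneg
    intro t ht
    rw [Finset.mem_Ioc] at ht
    rw [build_val K t ht.1 (by omega)]
    have htR : (1:ℝ) ≤ (t:ℝ) := by exact_mod_cast ht.1
    have : 1 / (t:ℝ) ≤ 1 := by
      rw [div_le_one (by linarith)]; linarith
    linarith
  have hS2 : ((K:ℝ) - 100) * (24/25 - 6/625) ≤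
      ∑ t ∈ Finset.Ioc 100 K, armRev (fun x => 2 - 1 * x) (2/3) (2/3)
      ((fun s => if s ≤ K then (6/5:ℝ) else 1) t)
      (armRef 1 0 (fun s => if s ≤ K then (6/5:ℝ) else 1) t) := by
    have hcard := Finset.card_nsmul_le_sum (Finset.Ioc 100 K)
      (fun t => armRev (fun x => 2 - 1 * x) (2/3) (2/3)
        ((fun s => if s ≤ K then (6/5:ℝ) else 1) t)
        (armRef 1 0 (fun s => if s ≤ K then (6/5:ℝ) else 1) t))
      (24/25 - 6/625) ?_
    · rw [Nat.card_Ioc, nsmul_eq_mul, Nat.cast_sub hK100] at hcard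
      simpa using hcard
    · intro t ht
      rw [Finset.mem_Ioc] at ht
      dsimp only
      rw [build_val K t (by omega) ht.2]
      have htR : (100:ℝ) ≤ (t:ℝ) := by exact_mod_cast Nat.le_of_lt ht.1
      have htpos : (0:ℝ) < (t:ℝ) := by linarith
      have : 1 / (t:ℝ) ≤ 1 / 100 := by
        apply one_div_le_one_div_of_le <;> linarith
      linarith
  have hS3 : ((T:ℝ) - (K:ℝ)) * (1 + (2/3) * (((K:ℝ)/5 - 1) / (T:ℝ))) ≤
      ∑ t ∈ Finset.Ioc K T, armRev (fun x => 2 - 1 * x) (2/3) (2/3)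
      ((fun s => if s ≤ K then (6/5:ℝ) else 1) t)
      (armRef 1 0 (fun s => if s ≤ K then (6/5:ℝ) else 1) t) := by
    have hcard := Finset.card_nsmul_le_sum (Finset.Ioc K T)
      (fun t => armRev (fun x => 2 - 1 * x) (2/3) (2/3)
        ((fun s => if s ≤ K then (6/5:ℝ) else 1) t)
        (armRef 1 0 (fun s => if s ≤ K then (6/5:ℝ) else 1) t))
      (1 + (2/3) * (((K:ℝ)/5 - 1) / (T:ℝ))) ?_
    · rw [Nat.card_Ioc, nsmul_eq_mul, Nat.cast_sub hKT] at hcard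
      exact hcard
    · intro t ht
      rw [Finset.mem_Ioc] at ht
      dsimp only
      rw [exp_val K t ht.1]
      have htpos : (0:ℝ) < (t:ℝ) := by
        have h : 0 < t := by omega
        exact_mod_cast h
      have htτ : (t:ℝ) ≤ (T:ℝ) := by exact_mod_cast ht.2
      have hdiv : ((K:ℝ)/5 - 1) / (T:ℝ) ≤ ((K:ℝ)/5 - 1) / (t:ℝ) := by
        gcongr
      linarith
  -- final arithmetic
  have hX : (0:ℝ) ≤ ((K:ℝ)/5 - 1) / (T:ℝ) := div_nonneg hk5 hτpos.le
  have h2 : (T:ℝ) / 2 ≤ (T:ℝ) - (K:ℝ) := by linarith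
  have h3 : ((T:ℝ) / 2) * (((K:ℝ)/5 - 1) / (T:ℝ)) ≤
      ((T:ℝ) - (K:ℝ)) * (((K:ℝ)/5 - 1) / (T:ℝ)) :=
    mul_le_mul_of_nonneg_right h2 hX
  have h4 : ((T:ℝ) / 2) * (((K:ℝ)/5 - 1) / (T:ℝ)) = ((K:ℝ)/5 - 1) / 2 := by
    field_simp
  have h5 : ((T:ℝ) - (K:ℝ)) * (1 + (2/3) * (((K:ℝ)/5 - 1) / (T:ℝ)))
      = ((T:ℝ) - (K:ℝ)) + (2/3) * (((T:ℝ) - (K:ℝ)) * (((K:ℝ)/5 - 1) / (T:ℝ))) := by ring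
  rw [h5] at hS3
  linarith

/-- Under ARM with linear demand and symmetric (loss-neutral) reference effects, there is
an instance on which every fixed-price policy loses revenue linear in the horizon compared
to the optimal policy. -/
theorem fixed_price_linear_regret :
    ∃ (a b η pbar r1 c : ℝ) (T0 : ℕ),
      0 < a ∧ 0 < b ∧ 0 < η ∧ 0 < pbar ∧
      b / (2 * a) < pbar ∧ 0 ≤ b - (a + η) * pbar ∧
      r1 ∈ Set.Icc 0 pbar ∧ 0 < c ∧
      ∀ T : ℕ, T0 ≤ T → ∀ p ∈ Set.Icc (0 : ℝ) pbar,
        c * (T : ℝ) ≤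
          armVStar (fun x => b - a * x) η η 1 T pbar r1 -
            armV (fun x => b - a * x) η η 1 T r1 (fun _ => p) := by
  refine ⟨1, 2, 2/3, 6/5, 0, 1/250, 100000, one_pos, two_pos, by norm_num, by norm_num,
    by norm_num, by norm_num, ⟨le_refl 0, by norm_num⟩, by norm_num, ?_⟩
  intro T hT p hp
  have hfix := fix_le T p hp.1
  have hq := qlow T hT
  have hqmem : ∀ t ∈ Finset.Icc 1 T,
      (fun s => if s ≤ T / 2 then (6/5:ℝ) else 1) t ∈ Set.Icc (0:ℝ) (6/5) := by
    intro t _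
    dsimp only
    split <;> exact ⟨by norm_num, by norm_num⟩
  have hstar : armV (fun x => 2 - 1 * x) (2/3) (2/3) 1 T 0
        (fun s => if s ≤ T / 2 then (6/5:ℝ) else 1)
      ≤ armVStar (fun x => 2 - 1 * x) (2/3) (2/3) 1 T (6/5) 0 := by
    unfold armVStar
    apply le_csSup
    · refine ⟨4 * (T:ℝ), ?_⟩
      rintro x ⟨pq, hpq, rfl⟩
      exact adm_le T pq hpq
    · exact ⟨_, hqmem, rfl⟩
  linarith
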